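/- Under the same backward-contraction hypothesis along a hyperbolic time n, if J_ν f = λ·e^{−φ} with φ α-Hölder, then the distortion of the Jacobian of f^n is bounded: K^{−1} ≤ (J_ν f^n(x))/(J_ν f^n(y)) ≤ K for all x, y in the hyperbolic cylinder, where K = e^{A·D^α}, D being the diameter bound of partition atoms and A the Hölder–distortion constant from the Birkhoff sum estimate. -/

import Mathlib

open Finset

theorem jacobian_distortion_hyperbolic_cylinder
    {M : Type*} [MetricSpace M]
    (f : M → M) (φ : M → ℝ)
    (α c C A D lam : ℝ) (hα : 0 < α) (hc : 0 < c) (hC : 0 < C)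
    (hA : 0 ≤ A) (hD : 0 ≤ D) (hlam : 0 < lam)
    (n : ℕ) (Rn : Set M)
    -- backward exponential contraction along the hyperbolic cylinder
    (hcontr : ∀ x ∈ Rn, ∀ y ∈ Rn, ∀ j : ℕ, j ≤ n →
      dist (f^[n - j] x) (f^[n - j] y)
        ≤ C * Real.exp (-(j : ℝ) * c) * dist (f^[n] x) (f^[n] y))
    -- Birkhoff-sum Hölder distortion estimate on the cylinder
    (hS : ∀ x ∈ Rn, ∀ y ∈ Rn,
      |(∑ j ∈ Finset.range n, φ (f^[j] x)) - (∑ j ∈ Finset.range n, φ (f^[j] y))|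
        ≤ A * dist (f^[n] x) (f^[n] y) ^ α)
    -- D bounds the diameter of the partition atoms
    (hdiam : ∀ x ∈ Rn, ∀ y ∈ Rn, dist (f^[n] x) (f^[n] y) ≤ D)
    -- the Jacobian of f^n with respect to ν
    (Jn : M → ℝ)
    (hJn : ∀ x, Jn x = lam ^ n * Real.exp (-(∑ j ∈ Finset.range n, φ (f^[j] x)))) :
    ∀ x ∈ Rn, ∀ y ∈ Rn,
      (Real.exp (A * D ^ α))⁻¹ ≤ Jn x / Jn y ∧ Jn x / Jn y ≤ Real.exp (A * D ^ α) := by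
  intro x hx y hy
  set Sx := ∑ j ∈ Finset.range n, φ (f^[j] x)
  set Sy := ∑ j ∈ Finset.range n, φ (f^[j] y)
  have hbound : |Sx - Sy| ≤ A * D ^ α := by
    refine (hS x hx y hy).trans ?_
    gcongr
    exact hdiam x hx y hy
  have hratio : Jn x / Jn y = Real.exp (Sy - Sx) := by
    rw [hJn x, hJn y, mul_div_mul_left _ _ (by positivity : (lam:ℝ)^n ≠ 0),
      ← Real.exp_sub]
    ring_nf
    rw [sub_eq_neg_add]
  rw [hratio, ← Real.exp_neg]
  constructor
  · exact Real.exp_le_exp.2 (by nlinarith [abs_le.1 hbound])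
  · exact Real.exp_le_exp.2 (by nlinarith [abs_le.1 hbound])
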